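/- arXiv:0903.4478 — 4 statements merged into one kernel-verified Lean document; each statement's English description precedes it below -/
import Mathlib

section
/- Let ħ(β₁,β₂) = β₁·ln(β₁/β₂) + (1−β₁)·ln((1−β₁)/(1−β₂)) for β₁, β₂ ∈ (0,1). Define H(p,λ) = ħ(Φ(p,λ), p). Then for all p ∈ [0,1] and λ ∈ ℝ, 0 ≤ H(p,λ) ≤ |λ|. -/
open Real Set

noncomputable def Phi (p l : ℝ) : ℝ := p * Real.exp l / (1 - p + p * Real.exp l)

/-- Relative entropy of Bernoulli(b₁) w.r.t. Bernoulli(b₂) (finite-formula version,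
which takes the correct value 0 at the degenerate points used here). -/
noncomputable def hbar (b1 b2 : ℝ) : ℝ :=
  b1 * Real.log (b1 / b2) + (1 - b1) * Real.log ((1 - b1) / (1 - b2))

noncomputable def Hfun (p l : ℝ) : ℝ := hbar (Phi p l) p

theorem stmt_5 (p l : ℝ) (hp : p ∈ Set.Icc (0:ℝ) 1) :
    0 ≤ Hfun p l ∧ Hfun p l ≤ |l| := by
  obtain ⟨hp0, hp1⟩ := hp
  rcases eq_or_lt_of_le hp0 with h0 | h0
  · simp [Hfun, Phi, hbar, ← h0, abs_nonneg]
  rcases eq_or_lt_of_le hp1 with h1 | h1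
  · subst h1
    have he := Real.exp_pos l
    have : Phi 1 l = 1 := by
      unfold Phi; field_simp; ring
    simp [Hfun, hbar, this, abs_nonneg]
  · have hel : 0 < Real.exp l := Real.exp_pos l
    have hD : 0 < 1 - p + p * Real.exp l := by nlinarith
    set D := 1 - p + p * Real.exp l with hDdef
    have hq : Phi p l = p * Real.exp l / D := rfl
    set q := p * Real.exp l / D with hqdef
    have hq0 : 0 < q := div_pos (by positivity) hD
    have h1q : 1 - q = (1 - p) / D := by
      field_simp [hqdef]
      rw [hqdef, sub_mul, div_mul_cancel₀ _ hD.ne']; linarith [hDdef]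
    have hq1 : q < 1 := by
      have h : 0 < (1 - p) / D := div_pos (by linarith) hD
      rw [← h1q] at h; linarith
    have hH : Hfun p l = q * l - Real.log D := by
      unfold Hfun hbar
      rw [hq]
      have e1 : q / p = Real.exp l / D := by
        field_simp [hqdef]; rw [hqdef, div_mul_cancel₀ _ hD.ne']
      have e2 : (1 - q) / (1 - p) = 1 / D := by
        have hp' : (1:ℝ) - p ≠ 0 := ne_of_gt (by linarith)
        rw [h1q, div_right_comm, div_self hp']
      rw [e1, e2, Real.log_div (Real.exp_ne_zero l) hD.ne', Real.log_exp,
        Real.log_div one_ne_zero hD.ne', Real.log_one]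
      ring
    constructor
    · -- lower bound: KL ≥ 0
      unfold Hfun hbar
      rw [hq]
      have key1 : Real.log (p / q) ≤ p / q - 1 :=
        Real.log_le_sub_one_of_pos (div_pos h0 hq0)
      have key2 : Real.log ((1 - p) / (1 - q)) ≤ (1 - p) / (1 - q) - 1 :=
        Real.log_le_sub_one_of_pos (div_pos (by linarith) (by linarith))
      have e1 : Real.log (q / p) = - Real.log (p / q) := by
        rw [← Real.log_inv]; congr 1; rw [inv_div]
      have e2 : Real.log ((1 - q) / (1 - p)) = - Real.log ((1 - p) / (1 - q)) := by
        rw [← Real.log_inv]; congr 1; rw [inv_div]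
      rw [e1, e2]
      have m1 : q * Real.log (p / q) ≤ p - q := by
        have := mul_le_mul_of_nonneg_left key1 hq0.le
        have heq : q * (p / q - 1) = p - q := by field_simp
        linarith [heq ▸ this]
      have m2 : (1 - q) * Real.log ((1 - p) / (1 - q)) ≤ q - p := by
        have h1q' : 0 < 1 - q := by linarith
        have := mul_le_mul_of_nonneg_left key2 h1q'.le
        have heq : (1 - q) * ((1 - p) / (1 - q) - 1) = q - p := by field_simp; ring
        linarith [heq ▸ this]
      nlinarith
    · rw [hH]
      rcases le_or_gt 0 l with hl | hl
      · have hD1 : 1 ≤ D := by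
          have : 1 ≤ Real.exp l := Real.one_le_exp hl
          rw [hDdef]; nlinarith
        have hlog : 0 ≤ Real.log D := Real.log_nonneg hD1
        have : q * l ≤ l := by nlinarith
        rw [abs_of_nonneg hl]; linarith
      · have he1 : Real.exp l ≤ 1 := Real.exp_le_one_iff.mpr hl.le
        have heD : Real.exp l ≤ D := by rw [hDdef]; nlinarith
        have hlog : l ≤ Real.log D := (Real.le_log_iff_exp_le hD).mpr heD
        have hql : q * l ≤ 0 := by nlinarith
        rw [abs_of_neg hl]; linarith
end

section
/- For p ∈ (0,1) and λ ∈ ℝ, with H(p,λ) = ħ(Φ(p,λ),p), the partial derivative ∂H/∂λ(p,λ) equals λ·∂Φ/∂λ(p,λ); consequently |∂H/∂λ(p,λ)| ≤ |λ| and |H(p,λ₁) − H(p,λ₂)| ≤ (|λ₁| + |λ₂|)·|λ₁ − λ₂| for all λ₁, λ₂ ∈ ℝ. -/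
open Real Set

lemma Dpos {p : ℝ} (hp0 : 0 < p) (hp1 : p < 1) (l : ℝ) :
    0 < 1 - p + p * Real.exp l := by
  have := Real.exp_pos l
  nlinarith

lemma Hfun_eq {p : ℝ} (hp0 : 0 < p) (hp1 : p < 1) (l : ℝ) :
    Hfun p l = Phi p l * l - Real.log (1 - p + p * Real.exp l) := by
  have hD := Dpos hp0 hp1 l
  have hDne : (1 - p + p * Real.exp l) ≠ 0 := ne_of_gt hD
  have hE := Real.exp_pos l
  have h1p : (1 : ℝ) - p ≠ 0 := by linarith
  unfold Hfun hbar Phi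
  have h1 : p * Real.exp l / (1 - p + p * Real.exp l) / p
      = Real.exp l / (1 - p + p * Real.exp l) := by
    field_simp
  have h2 : (1 - p * Real.exp l / (1 - p + p * Real.exp l))
      = (1 - p) / (1 - p + p * Real.exp l) := by
    field_simp
    ring
  have h3 : (1 - p) / (1 - p + p * Real.exp l) / (1 - p)
      = 1 / (1 - p + p * Real.exp l) := by
    field_simp
  rw [h1, h2, h3, Real.log_div (Real.exp_ne_zero l) hDne, Real.log_exp,
    one_div, Real.log_inv]
  field_simp
  ring

lemma hasDerivD (p l : ℝ) :
    HasDerivAt (fun m => 1 - p + p * Real.exp m) (p * Real.exp l) l :=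
  ((Real.hasDerivAt_exp l).const_mul p).const_add (1 - p)

lemma hasDerivPhi {p : ℝ} (hp0 : 0 < p) (hp1 : p < 1) (l : ℝ) :
    HasDerivAt (fun m => Phi p m)
      (p * (1 - p) * Real.exp l / (1 - p + p * Real.exp l) ^ 2) l := by
  have hDne : (1 - p + p * Real.exp l) ≠ 0 := ne_of_gt (Dpos hp0 hp1 l)
  have h := ((Real.hasDerivAt_exp l).const_mul p).div (hasDerivD p l) hDne
  refine h.congr_deriv ?_
  congr 1
  ring

lemma hasDerivHfun {p : ℝ} (hp0 : 0 < p) (hp1 : p < 1) (l : ℝ) :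
    HasDerivAt (fun m => Hfun p m)
      (l * (p * (1 - p) * Real.exp l / (1 - p + p * Real.exp l) ^ 2)) l := by
  have hDne : (1 - p + p * Real.exp l) ≠ 0 := ne_of_gt (Dpos hp0 hp1 l)
  have hlog : HasDerivAt (fun m => Real.log (1 - p + p * Real.exp m))
      (p * Real.exp l / (1 - p + p * Real.exp l)) l :=
    (hasDerivD p l).log hDne
  have h := (((hasDerivPhi hp0 hp1 l).mul (hasDerivAt_id l)).sub hlog)
  have heq : (fun m => Hfun p m)
      = fun m => Phi p m * m - Real.log (1 - p + p * Real.exp m) :=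
    funext fun m => Hfun_eq hp0 hp1 m
  rw [heq]
  refine h.congr_deriv ?_
  have : Phi p l = p * Real.exp l / (1 - p + p * Real.exp l) := rfl
  rw [this]
  simp only [id_eq]
  ring

lemma phiDerivBound {p : ℝ} (hp0 : 0 < p) (hp1 : p < 1) (l : ℝ) :
    p * (1 - p) * Real.exp l / (1 - p + p * Real.exp l) ^ 2 ≤ 1 := by
  have hD := Dpos hp0 hp1 l
  have hE := Real.exp_pos l
  rw [div_le_one (by positivity)]
  nlinarith [sq_nonneg (1 - p - p * Real.exp l), mul_pos (mul_pos hp0 (by linarith : (0:ℝ) < 1 - p)) hE]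

lemma phiDerivNonneg {p : ℝ} (hp0 : 0 < p) (hp1 : p < 1) (l : ℝ) :
    0 ≤ p * (1 - p) * Real.exp l / (1 - p + p * Real.exp l) ^ 2 := by
  have hE := Real.exp_pos l
  have : (0:ℝ) < 1 - p := by linarith
  positivity

theorem stmt_6 (p : ℝ) (hp : p ∈ Set.Ioo (0:ℝ) 1) :
    (∀ l : ℝ,
      HasDerivAt (fun m => Hfun p m)
        (l * (p * (1 - p) * Real.exp l / (1 - p + p * Real.exp l) ^ 2)) l ∧
      |l * (p * (1 - p) * Real.exp l / (1 - p + p * Real.exp l) ^ 2)| ≤ |l|) ∧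
    ∀ l1 l2 : ℝ, |Hfun p l1 - Hfun p l2| ≤ (|l1| + |l2|) * |l1 - l2| := by
  obtain ⟨hp0, hp1⟩ := hp
  have habs : ∀ l : ℝ,
      |l * (p * (1 - p) * Real.exp l / (1 - p + p * Real.exp l) ^ 2)| ≤ |l| := by
    intro l
    rw [abs_mul, abs_of_nonneg (phiDerivNonneg hp0 hp1 l)]
    calc |l| * (p * (1 - p) * Real.exp l / (1 - p + p * Real.exp l) ^ 2)
        ≤ |l| * 1 := by
          exact mul_le_mul_of_nonneg_left (phiDerivBound hp0 hp1 l) (abs_nonneg l)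
      _ = |l| := mul_one _
  constructor
  · intro l
    exact ⟨hasDerivHfun hp0 hp1 l, habs l⟩
  · intro l1 l2
    set s := Set.Icc (min l1 l2) (max l1 l2) with hs
    have h1 : l1 ∈ s := ⟨min_le_left _ _, le_max_left _ _⟩
    have h2 : l2 ∈ s := ⟨min_le_right _ _, le_max_right _ _⟩
    have key : ∀ x ∈ s, HasDerivWithinAt (fun m => Hfun p m)
        (x * (p * (1 - p) * Real.exp x / (1 - p + p * Real.exp x) ^ 2)) s x :=
      fun x _ => (hasDerivHfun hp0 hp1 x).hasDerivWithinAt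
    have bound : ∀ x ∈ s, ‖x * (p * (1 - p) * Real.exp x / (1 - p + p * Real.exp x) ^ 2)‖
        ≤ |l1| + |l2| := by
      intro x hx
      have hxabs : |x| ≤ |l1| + |l2| := by
        rw [abs_le]
        constructor
        · have : -(|l1| + |l2|) ≤ min l1 l2 := by
            rcases min_cases l1 l2 with ⟨h, _⟩ | ⟨h, _⟩ <;> rw [h] <;>
              [have := neg_abs_le l1; have := neg_abs_le l2] <;>
              have := abs_nonneg l1 <;> have := abs_nonneg l2 <;> linarith
          linarith [hx.1]
        · have : max l1 l2 ≤ |l1| + |l2| := by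
            rcases max_cases l1 l2 with ⟨h, _⟩ | ⟨h, _⟩ <;> rw [h] <;>
              [have := le_abs_self l1; have := le_abs_self l2] <;>
              have := abs_nonneg l1 <;> have := abs_nonneg l2 <;> linarith
          linarith [hx.2]
      calc ‖x * (p * (1 - p) * Real.exp x / (1 - p + p * Real.exp x) ^ 2)‖
          = |x * (p * (1 - p) * Real.exp x / (1 - p + p * Real.exp x) ^ 2)| := rfl
        _ ≤ |x| := habs x
        _ ≤ |l1| + |l2| := hxabs
    have := (convex_Icc (min l1 l2) (max l1 l2)).norm_image_sub_le_of_norm_hasDerivWithin_le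
      key bound h2 h1
    simpa [Real.norm_eq_abs] using this
end

section
/- Fix a probability measure V̄ on [0,1] with V̄((0,1)) > 0 (equivalently V̄({0}) + V̄({1}) < 1). Then the function λ ↦ ∫_{[0,1]} Φ(p,λ) dV̄(p), extended to λ = ±∞ by Φ(p,−∞) = 1_{p=1} and Φ(p,+∞) = 1_{p>0}, is continuous and strictly increasing on [−∞,∞], with value V̄({1}) at −∞ and V̄((0,1]) at +∞. Consequently, for every α' with V̄({1}) ≤ α' ≤ 1 − V̄({0}) and (α',V̄) ≠ (V̄({1}), 1−V̄({0})) degenerate, there exists a unique Λ ∈ [−∞,∞] with ∫ Φ(p,Λ) dV̄(p) = α'; and if V̄({1}) < α' < 1 − V̄({0}) then Λ ∈ ℝ. -/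
open MeasureTheory Set

/-- `Φ(p,λ)` extended to `λ ∈ [-∞,∞]`. -/
noncomputable def PhiE (p : ℝ) (l : EReal) : ℝ :=
  if l = ⊤ then (if 0 < p then 1 else 0)
  else if l = ⊥ then (if p = 1 then 1 else 0)
  else p * Real.exp l.toReal / (1 - p + p * Real.exp l.toReal)

noncomputable def phiR (p x : ℝ) : ℝ := p * Real.exp x / (1 - p + p * Real.exp x)

lemma denom_pos {p : ℝ} (hp0 : 0 ≤ p) (hp1 : p ≤ 1) (x : ℝ) :
    0 < 1 - p + p * Real.exp x := by
  rcases eq_or_lt_of_le hp1 with h | h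
  · subst h; nlinarith [Real.exp_pos x]
  · nlinarith [mul_nonneg hp0 (Real.exp_pos x).le]

lemma phiR_nonneg {p : ℝ} (hp0 : 0 ≤ p) (hp1 : p ≤ 1) (x : ℝ) : 0 ≤ phiR p x :=
  div_nonneg (by positivity) (denom_pos hp0 hp1 x).le

lemma phiR_le_one {p : ℝ} (hp0 : 0 ≤ p) (hp1 : p ≤ 1) (x : ℝ) : phiR p x ≤ 1 := by
  rw [phiR, div_le_one (denom_pos hp0 hp1 x)]; linarith

lemma phiR_mono {p : ℝ} (hp0 : 0 ≤ p) (hp1 : p ≤ 1) : Monotone (phiR p) := by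
  intro x y hxy
  rw [phiR, phiR, div_le_div_iff₀ (denom_pos hp0 hp1 x) (denom_pos hp0 hp1 y)]
  nlinarith [mul_le_mul_of_nonneg_left (Real.exp_le_exp.2 hxy)
    (mul_nonneg hp0 (by linarith : (0:ℝ) ≤ 1 - p)), Real.exp_pos x, Real.exp_pos y]

lemma phiR_strictMono {p : ℝ} (hp0 : 0 < p) (hp1 : p < 1) : StrictMono (phiR p) := by
  intro x y hxy
  rw [phiR, phiR, div_lt_div_iff₀ (denom_pos hp0.le hp1.le x) (denom_pos hp0.le hp1.le y)]
  nlinarith [mul_lt_mul_of_pos_left (Real.exp_lt_exp.2 hxy)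
    (mul_pos hp0 (by linarith : (0:ℝ) < 1 - p)), Real.exp_pos x, Real.exp_pos y]

lemma phiR_one (x : ℝ) : phiR 1 x = 1 := by
  rw [phiR]; simp [Real.exp_ne_zero x]

lemma phiR_zero (x : ℝ) : phiR 0 x = 0 := by simp [phiR]

lemma phiE_coe (p : ℝ) (x : ℝ) : PhiE p (x : EReal) = phiR p x := by
  rw [PhiE, if_neg (EReal.coe_ne_top x), if_neg (EReal.coe_ne_bot x), EReal.toReal_coe, phiR]

lemma phiE_top (p : ℝ) : PhiE p ⊤ = if 0 < p then 1 else 0 := by rw [PhiE, if_pos rfl]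

lemma phiE_bot (p : ℝ) : PhiE p ⊥ = if p = 1 then 1 else 0 := by
  rw [PhiE, if_neg (by simp), if_pos rfl]

lemma phiE_le_top {p : ℝ} (hp0 : 0 ≤ p) (hp1 : p ≤ 1) (l : EReal) : PhiE p l ≤ PhiE p ⊤ := by
  induction l using EReal.rec with
  | bot =>
    rw [phiE_bot, phiE_top]
    split_ifs with h1 h2
    · exact le_refl 1
    · exact absurd (h1 ▸ one_pos) h2
    · exact zero_le_one
    · exact le_refl 0
  | coe x =>
    rw [phiE_coe, phiE_top]
    rcases hp0.lt_or_eq with h | h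
    · rw [if_pos h]; exact phiR_le_one hp0 hp1 x
    · rw [if_neg (by rw [← h]; exact lt_irrefl 0), ← h, phiR_zero]
  | top => exact le_refl _

lemma phiE_bot_le {p : ℝ} (hp0 : 0 ≤ p) (hp1 : p ≤ 1) (l : EReal) : PhiE p ⊥ ≤ PhiE p l := by
  induction l using EReal.rec with
  | bot => exact le_refl _
  | coe x =>
    rw [phiE_coe, phiE_bot]
    split_ifs with h
    · rw [h, phiR_one]
    · exact phiR_nonneg hp0 hp1 x
  | top =>
    rw [phiE_bot, phiE_top]
    split_ifs with h1 h2
    · exact le_refl 1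
    · exact absurd (h1 ▸ one_pos) h2
    · exact zero_le_one
    · exact le_refl 0

lemma phiE_mono {p : ℝ} (hp0 : 0 ≤ p) (hp1 : p ≤ 1) : Monotone (PhiE p) := by
  intro a b hab
  induction b using EReal.rec with
  | bot => rw [le_bot_iff.1 hab]
  | coe y =>
    induction a using EReal.rec with
    | bot => exact phiE_bot_le hp0 hp1 _
    | coe x => rw [phiE_coe, phiE_coe]; exact phiR_mono hp0 hp1 (EReal.coe_le_coe_iff.1 hab)
    | top => exact absurd (top_le_iff.1 hab) (EReal.coe_ne_top y)
  | top => exact phiE_le_top hp0 hp1 _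

lemma phiE_strict {p : ℝ} (hp0 : 0 < p) (hp1 : p < 1) {a b : EReal} (hab : a < b) :
    PhiE p a < PhiE p b := by
  induction b using EReal.rec with
  | bot => exact absurd hab (not_lt_bot)
  | coe y =>
    induction a using EReal.rec with
    | bot =>
      rw [phiE_bot, if_neg hp1.ne, phiE_coe, phiR]
      exact div_pos (by positivity) (denom_pos hp0.le hp1.le y)
    | coe x =>
      rw [phiE_coe, phiE_coe]; exact phiR_strictMono hp0 hp1 (EReal.coe_lt_coe_iff.1 hab)
    | top => exact absurd hab (not_top_lt)
  | top =>
    rw [phiE_top, if_pos hp0]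
    induction a using EReal.rec with
    | bot => rw [phiE_bot, if_neg hp1.ne]; exact one_pos
    | coe x =>
      rw [phiE_coe, phiR, div_lt_one (denom_pos hp0.le hp1.le x)]
      linarith
    | top => exact absurd hab (lt_irrefl _)

lemma tendsto_phiR_atTop {p : ℝ} (hp0 : 0 ≤ p) (hp1 : p ≤ 1) :
    Filter.Tendsto (phiR p) Filter.atTop (nhds (PhiE p ⊤)) := by
  rcases hp0.lt_or_eq with h | h
  · rw [phiE_top, if_pos h]
    have heq : ∀ x : ℝ, phiR p x = (1 + ((1 - p) / p) * Real.exp (-x))⁻¹ := by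
      intro x
      have hpne : p ≠ 0 := h.ne'
      have hexp : Real.exp x ≠ 0 := (Real.exp_pos x).ne'
      have h1 : 1 + (1 - p) / p * (Real.exp x)⁻¹ = (1 - p + p * Real.exp x) / (p * Real.exp x) := by
        field_simp
        ring
      rw [phiR, Real.exp_neg, h1, inv_div]
    have hden : Filter.Tendsto (fun x : ℝ => 1 + ((1 - p) / p) * Real.exp (-x))
        Filter.atTop (nhds 1) := by
      have := (Real.tendsto_exp_neg_atTop_nhds_zero).const_mul ((1 - p) / p)
      have h2 := (tendsto_const_nhds (x := (1:ℝ)) (f := Filter.atTop)).add this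
      simpa using h2
    have := hden.inv₀ one_ne_zero
    rw [inv_one] at this
    exact Filter.Tendsto.congr (fun x => (heq x).symm) this
  · subst h
    rw [phiE_top, if_neg (lt_irrefl 0)]
    exact Filter.Tendsto.congr (fun x => (phiR_zero x).symm) tendsto_const_nhds

lemma tendsto_phiR_atBot {p : ℝ} (hp0 : 0 ≤ p) (hp1 : p ≤ 1) :
    Filter.Tendsto (phiR p) Filter.atBot (nhds (PhiE p ⊥)) := by
  rcases hp1.lt_or_eq with h | h
  · rw [phiE_bot, if_neg h.ne]
    have hnum : Filter.Tendsto (fun x : ℝ => p * Real.exp x) Filter.atBot (nhds 0) := by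
      simpa using Real.tendsto_exp_atBot.const_mul p
    have hden : Filter.Tendsto (fun x : ℝ => 1 - p + p * Real.exp x) Filter.atBot
        (nhds (1 - p)) := by
      simpa using (tendsto_const_nhds (x := 1 - p) (f := Filter.atBot)).add hnum
    have := hnum.div hden (by linarith)
    have h2 := this.congr (f₂ := phiR p) (fun x => rfl)
    simpa using h2
  · subst h
    rw [phiE_bot, if_pos rfl]
    exact Filter.Tendsto.congr (fun x => (phiR_one x).symm) tendsto_const_nhds

lemma phiE_continuous {p : ℝ} (hp0 : 0 ≤ p) (hp1 : p ≤ 1) : Continuous (PhiE p) := by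
  rw [continuous_iff_continuousAt]
  intro l
  induction l using EReal.rec with
  | bot =>
    rw [ContinuousAt]
    rw [tendsto_order]
    constructor
    · intro a ha
      exact Filter.Eventually.of_forall fun l => lt_of_lt_of_le ha (phiE_bot_le hp0 hp1 l)
    · intro b hb
      have := (tendsto_phiR_atBot hp0 hp1).eventually_lt_const hb
      obtain ⟨M, hM⟩ := this.exists
      have hmem : Set.Iic ((M : EReal)) ∈ nhds (⊥ : EReal) :=
        Iic_mem_nhds (EReal.bot_lt_coe M)
      refine Filter.mem_of_superset hmem fun l hl => ?_
      calc PhiE p l ≤ PhiE p (M : EReal) := phiE_mono hp0 hp1 hl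
        _ = phiR p M := phiE_coe p M
        _ < b := hM
  | top =>
    rw [ContinuousAt]
    rw [tendsto_order]
    constructor
    · intro a ha
      have := (tendsto_phiR_atTop hp0 hp1).eventually_const_lt ha
      obtain ⟨M, hM⟩ := this.exists
      have hmem : Set.Ici ((M : EReal)) ∈ nhds (⊤ : EReal) :=
        Ici_mem_nhds (EReal.coe_lt_top M)
      refine Filter.mem_of_superset hmem fun l hl => ?_
      calc a < phiR p M := hM
        _ = PhiE p (M : EReal) := (phiE_coe p M).symm
        _ ≤ PhiE p l := phiE_mono hp0 hp1 hl
    · intro b hb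
      exact Filter.Eventually.of_forall fun l => lt_of_le_of_lt (phiE_le_top hp0 hp1 l) hb
  | coe x =>
    have hev : (fun l : EReal => phiR p l.toReal) =ᶠ[nhds ((x : ℝ) : EReal)] PhiE p := by
      have hopen : IsOpen {l : EReal | l ≠ ⊥ ∧ l ≠ ⊤} := by
        have : {l : EReal | l ≠ ⊥ ∧ l ≠ ⊤} = Set.Ioo ⊥ ⊤ := by
          ext l
          simp [Set.mem_Ioo, bot_lt_iff_ne_bot, lt_top_iff_ne_top]
        rw [this]
        exact isOpen_Ioo
      have hmem : {l : EReal | l ≠ ⊥ ∧ l ≠ ⊤} ∈ nhds ((x : ℝ) : EReal) :=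
        hopen.mem_nhds ⟨EReal.coe_ne_bot x, EReal.coe_ne_top x⟩
      refine Filter.eventuallyEq_of_mem hmem fun l hl => ?_
      rw [PhiE, if_neg hl.2, if_neg hl.1, phiR]
    refine ContinuousAt.congr ?_ hev
    have h1 : ContinuousAt EReal.toReal ((x : ℝ) : EReal) :=
      EReal.tendsto_toReal (EReal.coe_ne_top x) (EReal.coe_ne_bot x)
    have h2 : Continuous (phiR p) := by
      apply Continuous.div
      · exact (continuous_const.mul Real.continuous_exp)
      · exact (continuous_const.add (continuous_const.mul Real.continuous_exp))
      · exact fun x => (denom_pos hp0 hp1 x).ne'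
    exact h2.continuousAt.comp h1

theorem stmt_10 (V : Measure (Set.Icc (0:ℝ) 1)) [IsProbabilityMeasure V]
    (hV : 0 < (V {p | 0 < (p : ℝ) ∧ (p : ℝ) < 1}).toReal) :
    Continuous (fun l : EReal => ∫ p, PhiE (p : ℝ) l ∂V) ∧
    StrictMono (fun l : EReal => ∫ p, PhiE (p : ℝ) l ∂V) ∧
    (∫ p, PhiE (p : ℝ) (⊥ : EReal) ∂V) = (V {p | (p : ℝ) = 1}).toReal ∧
    (∫ p, PhiE (p : ℝ) (⊤ : EReal) ∂V) = (V {p | 0 < (p : ℝ)}).toReal ∧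
    ∀ α' : ℝ,
      (V {p | (p : ℝ) = 1}).toReal ≤ α' →
      α' ≤ 1 - (V {p | (p : ℝ) = 0}).toReal →
      ¬((V {p | (p : ℝ) = 1}).toReal = α' ∧ α' = 1 - (V {p | (p : ℝ) = 0}).toReal) →
      (∃! Λ : EReal, (∫ p, PhiE (p : ℝ) Λ ∂V) = α') ∧
      ((V {p | (p : ℝ) = 1}).toReal < α' → α' < 1 - (V {p | (p : ℝ) = 0}).toReal →
        ∀ Λ : EReal, (∫ p, PhiE (p : ℝ) Λ ∂V) = α' → Λ ≠ ⊤ ∧ Λ ≠ ⊥) := by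
  set F : EReal → ℝ := fun l => ∫ p, PhiE (p : ℝ) l ∂V with hF
  have hmeas : ∀ l : EReal,
      AEStronglyMeasurable (fun p : Set.Icc (0:ℝ) 1 => PhiE (p:ℝ) l) V := by
    intro l
    induction l using EReal.rec with
    | bot =>
      have hs : MeasurableSet {p : Set.Icc (0:ℝ) 1 | (p:ℝ) = 1} :=
        (isClosed_eq continuous_subtype_val continuous_const).measurableSet
      have heq : (fun p : Set.Icc (0:ℝ) 1 => PhiE (p:ℝ) ⊥)
          = fun p : Set.Icc (0:ℝ) 1 => if (p:ℝ) = 1 then (1:ℝ) else 0 := by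
        funext p; rw [phiE_bot]
      rw [heq]
      exact (Measurable.ite hs measurable_const measurable_const).aestronglyMeasurable
    | coe x =>
      have hc : Continuous fun p : Set.Icc (0:ℝ) 1 => phiR (p:ℝ) x := by
        apply Continuous.div
        · exact continuous_subtype_val.mul continuous_const
        · exact (continuous_const.sub continuous_subtype_val).add
            (continuous_subtype_val.mul continuous_const)
        · exact fun q => (denom_pos q.2.1 q.2.2 x).ne'
      have heq : (fun p : Set.Icc (0:ℝ) 1 => PhiE (p:ℝ) (x:EReal))
          = fun p : Set.Icc (0:ℝ) 1 => phiR (p:ℝ) x := by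
        funext p; exact phiE_coe _ _
      rw [heq]
      exact hc.aestronglyMeasurable
    | top =>
      have hs : MeasurableSet {p : Set.Icc (0:ℝ) 1 | 0 < (p:ℝ)} :=
        (isOpen_lt continuous_const continuous_subtype_val).measurableSet
      have heq : (fun p : Set.Icc (0:ℝ) 1 => PhiE (p:ℝ) ⊤)
          = fun p : Set.Icc (0:ℝ) 1 => if 0 < (p:ℝ) then (1:ℝ) else 0 := by
        funext p; rw [phiE_top]
      rw [heq]
      exact (Measurable.ite hs measurable_const measurable_const).aestronglyMeasurable
  have hbd : ∀ (l : EReal) (p : Set.Icc (0:ℝ) 1), ‖PhiE (p:ℝ) l‖ ≤ 1 := by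
    intro l p
    rw [Real.norm_eq_abs, abs_le]
    have h0 : (0:ℝ) ≤ PhiE (p:ℝ) ⊥ := by rw [phiE_bot]; split_ifs <;> norm_num
    have h1 : PhiE (p:ℝ) ⊤ ≤ 1 := by rw [phiE_top]; split_ifs <;> norm_num
    constructor
    · linarith [phiE_bot_le p.2.1 p.2.2 l]
    · linarith [phiE_le_top p.2.1 p.2.2 l]
  have hint : ∀ l : EReal, Integrable (fun p : Set.Icc (0:ℝ) 1 => PhiE (p:ℝ) l) V := by
    intro l
    exact (integrable_const (1:ℝ)).mono' (hmeas l)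
      (Filter.Eventually.of_forall (hbd l))
  have hcont : Continuous F := by
    rw [continuous_iff_continuousAt]
    intro l
    refine continuousAt_of_dominated (Filter.Eventually.of_forall hmeas)
      (Filter.Eventually.of_forall fun l' => Filter.Eventually.of_forall (hbd l'))
      (integrable_const 1) ?_
    exact Filter.Eventually.of_forall fun p =>
      (phiE_continuous p.2.1 p.2.2).continuousAt
  have hposmeas : 0 < V {p : Set.Icc (0:ℝ) 1 | 0 < (p:ℝ) ∧ (p:ℝ) < 1} := by
    rw [pos_iff_ne_zero]
    intro h0
    rw [h0] at hV
    simp at hV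
  have hsm : StrictMono F := by
    intro a b hab
    have hnn : 0 ≤ᵐ[V] fun p : Set.Icc (0:ℝ) 1 => PhiE (p:ℝ) b - PhiE (p:ℝ) a :=
      Filter.Eventually.of_forall fun p =>
        sub_nonneg.2 (phiE_mono p.2.1 p.2.2 hab.le)
    have hsub : 0 < ∫ p, (PhiE (p:ℝ) b - PhiE (p:ℝ) a) ∂V := by
      rw [integral_pos_iff_support_of_nonneg_ae hnn ((hint b).sub (hint a))]
      refine lt_of_lt_of_le hposmeas (measure_mono ?_)
      intro p hp
      simp only [Function.mem_support]
      exact (sub_pos.2 (phiE_strict hp.1 hp.2 hab)).ne'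
    rw [integral_sub (hint b) (hint a)] at hsub
    simp only [hF]
    linarith
  have hbotval : F ⊥ = (V {p : Set.Icc (0:ℝ) 1 | (p:ℝ) = 1}).toReal := by
    have hs : MeasurableSet {p : Set.Icc (0:ℝ) 1 | (p:ℝ) = 1} :=
      (isClosed_eq continuous_subtype_val continuous_const).measurableSet
    have heq : (fun p : Set.Icc (0:ℝ) 1 => PhiE (p:ℝ) ⊥)
        = Set.indicator {p : Set.Icc (0:ℝ) 1 | (p:ℝ) = 1} (fun _ => (1:ℝ)) := by
      funext p
      rw [phiE_bot, Set.indicator_apply]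
      simp [Set.mem_setOf_eq]
    simp only [hF]
    rw [heq, integral_indicator_const _ hs]
    simp
    rfl
  have htopval : F ⊤ = (V {p : Set.Icc (0:ℝ) 1 | 0 < (p:ℝ)}).toReal := by
    have hs : MeasurableSet {p : Set.Icc (0:ℝ) 1 | 0 < (p:ℝ)} :=
      (isOpen_lt continuous_const continuous_subtype_val).measurableSet
    have heq : (fun p : Set.Icc (0:ℝ) 1 => PhiE (p:ℝ) ⊤)
        = Set.indicator {p : Set.Icc (0:ℝ) 1 | 0 < (p:ℝ)} (fun _ => (1:ℝ)) := by
      funext p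
      rw [phiE_top, Set.indicator_apply]
      simp [Set.mem_setOf_eq]
    simp only [hF]
    rw [heq, integral_indicator_const _ hs]
    simp
    rfl
  have hcompl : (V {p : Set.Icc (0:ℝ) 1 | 0 < (p:ℝ)}).toReal
      = 1 - (V {p : Set.Icc (0:ℝ) 1 | (p:ℝ) = 0}).toReal := by
    have hsc : MeasurableSet {p : Set.Icc (0:ℝ) 1 | (p:ℝ) = 0} :=
      (isClosed_eq continuous_subtype_val continuous_const).measurableSet
    have hce : {p : Set.Icc (0:ℝ) 1 | (p:ℝ) = 0}ᶜ = {p : Set.Icc (0:ℝ) 1 | 0 < (p:ℝ)} := by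
      ext p
      simp only [Set.mem_compl_iff, Set.mem_setOf_eq]
      constructor
      · intro h
        exact lt_of_le_of_ne p.2.1 (Ne.symm h)
      · intro h hh
        rw [hh] at h
        exact lt_irrefl 0 h
    rw [← hce, measure_compl hsc (measure_ne_top V _), measure_univ,
      ENNReal.toReal_sub_of_le prob_le_one (by simp)]
    simp
  refine ⟨hcont, hsm, hbotval, htopval, ?_⟩
  intro α' h1 h2 _h3
  have h1' : F ⊥ ≤ α' := by rw [hbotval]; exact h1
  have h2' : α' ≤ F ⊤ := by rw [htopval, hcompl]; exact h2
  obtain ⟨Λ, -, hΛ⟩ := intermediate_value_Icc (bot_le : (⊥:EReal) ≤ ⊤)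
    hcont.continuousOn ⟨h1', h2'⟩
  refine ⟨⟨Λ, hΛ, fun y hy => hsm.injective (hy.trans hΛ.symm)⟩, ?_⟩
  intro hlt1 hlt2 Λ' hΛ'
  constructor
  · intro h
    rw [h] at hΛ'
    have hT : F ⊤ = α' := hΛ'
    rw [htopval, hcompl] at hT
    linarith
  · intro h
    rw [h] at hΛ'
    have hB : F ⊥ = α' := hΛ'
    rw [hbotval] at hB
    linarith
end

section
/- Let X₁,…,X_N be independent Bernoulli random variables with parameters ũ₁,…,ũ_N ∈ [0,1] and γ = Σ(X_n − ũ_n). Then there is a constant κ > 0 (independent of N and the ũ_n) such that |E[e^{i(θ/√N)γ}]| ≤ exp(−κ·σ²_N·θ²) for all θ ∈ (−π√N, π√N), where σ²_N = (1/N)·Σ_{n=1}^N ũ_n(1 − ũ_n). -/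
open MeasureTheory ProbabilityTheory Real

/-- Product formula for the integral of two independent complex random variables. -/
lemma aux_indepFun_integral_mul_complex {Ω : Type*} {mΩ : MeasurableSpace Ω} {μ : Measure Ω}
    {f g : Ω → ℂ} (h : IndepFun f g μ) (hf : Integrable f μ) (hg : Integrable g μ) :
    ∫ ω, f ω * g ω ∂μ = (∫ ω, f ω ∂μ) * ∫ ω, g ω ∂μ := by
  have hfr : Integrable (fun ω => (f ω).re) μ := hf.re
  have hfi : Integrable (fun ω => (f ω).im) μ := hf.im
  have hgr : Integrable (fun ω => (g ω).re) μ := hg.re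
  have hgi : Integrable (fun ω => (g ω).im) μ := hg.im
  have hrr : IndepFun (fun ω => (f ω).re) (fun ω => (g ω).re) μ :=
    h.comp Complex.measurable_re Complex.measurable_re
  have hri : IndepFun (fun ω => (f ω).re) (fun ω => (g ω).im) μ :=
    h.comp Complex.measurable_re Complex.measurable_im
  have hir : IndepFun (fun ω => (f ω).im) (fun ω => (g ω).re) μ :=
    h.comp Complex.measurable_im Complex.measurable_re
  have hii : IndepFun (fun ω => (f ω).im) (fun ω => (g ω).im) μ :=
    h.comp Complex.measurable_im Complex.measurable_im
  have e1 : ∫ ω, (f ω).re * (g ω).re ∂μ = (∫ ω, (f ω).re ∂μ) * ∫ ω, (g ω).re ∂μ :=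
    hrr.integral_mul_eq_mul_integral hfr.1 hgr.1
  have e2 : ∫ ω, (f ω).re * (g ω).im ∂μ = (∫ ω, (f ω).re ∂μ) * ∫ ω, (g ω).im ∂μ :=
    hri.integral_mul_eq_mul_integral hfr.1 hgi.1
  have e3 : ∫ ω, (f ω).im * (g ω).re ∂μ = (∫ ω, (f ω).im ∂μ) * ∫ ω, (g ω).re ∂μ :=
    hir.integral_mul_eq_mul_integral hfi.1 hgr.1
  have e4 : ∫ ω, (f ω).im * (g ω).im ∂μ = (∫ ω, (f ω).im ∂μ) * ∫ ω, (g ω).im ∂μ :=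
    hii.integral_mul_eq_mul_integral hfi.1 hgi.1
  have i1 : Integrable (fun ω => (f ω).re * (g ω).re) μ :=
    hrr.integrable_mul hfr hgr
  have i2 : Integrable (fun ω => (f ω).re * (g ω).im) μ :=
    hri.integrable_mul hfr hgi
  have i3 : Integrable (fun ω => (f ω).im * (g ω).re) μ :=
    hir.integrable_mul hfi hgr
  have i4 : Integrable (fun ω => (f ω).im * (g ω).im) μ :=
    hii.integrable_mul hfi hgi
  have hmul : Integrable (fun ω => f ω * g ω) μ := h.integrable_mul hf hg
  have hre_int : ∀ {F : Ω → ℂ}, Integrable F μ → (∫ ω, F ω ∂μ).re = ∫ ω, (F ω).re ∂μ :=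
    fun hF => (integral_re hF).symm
  have him_int : ∀ {F : Ω → ℂ}, Integrable F μ → (∫ ω, F ω ∂μ).im = ∫ ω, (F ω).im ∂μ :=
    fun hF => (integral_im hF).symm
  apply Complex.ext
  · rw [hre_int hmul]
    have : ∀ ω, (f ω * g ω).re = (f ω).re * (g ω).re - (f ω).im * (g ω).im := by
      intro ω; simp [Complex.mul_re]
    simp_rw [this]
    rw [integral_sub i1 i4, e1, e4, Complex.mul_re, hre_int hf, hre_int hg,
      him_int hf, him_int hg]
  · rw [him_int hmul]
    have : ∀ ω, (f ω * g ω).im = (f ω).re * (g ω).im + (f ω).im * (g ω).re := by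
      intro ω; simp [Complex.mul_im]
    simp_rw [this]
    rw [integral_add i2 i3, e2, e3, Complex.mul_im, hre_int hf, hre_int hg,
      him_int hf, him_int hg]

/-- Integral of a finite product of independent, uniformly bounded complex random variables. -/
lemma aux_integral_finset_prod {Ω : Type*} {mΩ : MeasurableSpace Ω} {μ : Measure Ω}
    [IsProbabilityMeasure μ] {ι : Type*} {f : ι → Ω → ℂ}
    (hindep : iIndepFun f μ) (hmeas : ∀ i, Measurable (f i))
    (hnorm : ∀ i ω, ‖f i ω‖ ≤ 1) (s : Finset ι) :
    ∫ ω, ∏ i ∈ s, f i ω ∂μ = ∏ i ∈ s, ∫ ω, f i ω ∂μ := by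
  classical
  have hint : ∀ t : Finset ι, Integrable (fun ω => ∏ j ∈ t, f j ω) μ := by
    intro t
    refine Integrable.mono' (integrable_const (1 : ℝ))
      (Finset.aestronglyMeasurable_fun_prod t fun j _ => (hmeas j).aestronglyMeasurable)
      (Filter.Eventually.of_forall fun ω => ?_)
    calc ‖∏ j ∈ t, f j ω‖ = ∏ j ∈ t, ‖f j ω‖ := norm_prod _ _
      _ ≤ 1 := Finset.prod_le_one (fun j _ => norm_nonneg _) (fun j _ => hnorm j ω)
  induction s using Finset.induction_on with
  | empty => simp
  | insert i s hi ih =>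
    have hIF : IndepFun (∏ j ∈ s, f j) (f i) μ :=
      hindep.indepFun_finset_prod_of_notMem hmeas hi
    have hIF' : IndepFun (fun ω => ∏ j ∈ s, f j ω) (f i) μ := by
      have : (∏ j ∈ s, f j) = fun ω => ∏ j ∈ s, f j ω := by
        funext ω; simp
      rwa [this] at hIF
    rw [Finset.prod_insert hi, ← ih]
    have : ∫ ω, ∏ j ∈ insert i s, f j ω ∂μ
        = ∫ ω, f i ω * ∏ j ∈ s, f j ω ∂μ := by
      congr 1; funext ω; rw [Finset.prod_insert hi]
    rw [this, aux_indepFun_integral_mul_complex hIF'.symm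
      (by simpa using hint {i}) (hint s), mul_comm]

/-- Value of a Bernoulli characteristic-function factor. -/
lemma aux_bernoulli_integral {Ω : Type*} [MeasureSpace Ω] [IsProbabilityMeasure (ℙ : Measure Ω)]
    (X : Ω → ℝ) (hm : Measurable X) (h01 : ∀ ω, X ω = 0 ∨ X ω = 1) (u : ℝ)
    (hu : (ℙ {ω | X ω = 1}).toReal = u) (t : ℝ) :
    ∫ ω, Complex.exp ((t : ℂ) * Complex.I * ((X ω : ℂ) - (u : ℂ))) ∂ℙ
      = Complex.exp (-((t : ℂ) * Complex.I * u)) *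
          (1 + (Complex.exp ((t : ℂ) * Complex.I) - 1) * u) := by
  have key : ∀ ω, Complex.exp ((t : ℂ) * Complex.I * ((X ω : ℂ) - (u : ℂ)))
      = Complex.exp (-((t : ℂ) * Complex.I * u)) *
          (1 + (Complex.exp ((t : ℂ) * Complex.I) - 1) * (X ω : ℂ)) := by
    intro ω
    rcases h01 ω with h | h <;> rw [h]
    · simp only [Complex.ofReal_zero, mul_zero, add_zero, mul_one]
      congr 1; ring
    · rw [show (1 : ℂ) + (Complex.exp ((t : ℂ) * Complex.I) - 1) * ((1 : ℝ) : ℂ)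
          = Complex.exp ((t : ℂ) * Complex.I) by push_cast; ring, ← Complex.exp_add]
      congr 1; push_cast; ring
  simp_rw [key]
  rw [integral_const_mul]
  congr 1
  have hXint : Integrable (fun ω => ((X ω : ℝ) : ℂ)) ℙ := by
    refine Integrable.mono' (integrable_const (1 : ℝ))
      (Complex.measurable_ofReal.comp hm).aestronglyMeasurable
      (Filter.Eventually.of_forall fun ω => ?_)
    rcases h01 ω with h | h <;> simp [h]
  have hofReal : ∫ ω, ((X ω : ℝ) : ℂ) ∂ℙ = ((∫ ω, X ω ∂ℙ : ℝ) : ℂ) := integral_ofReal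
  rw [integral_add (integrable_const _) (hXint.const_mul _), integral_const,
    integral_const_mul, hofReal]
  have hXeq : X = Set.indicator {ω | X ω = 1} (fun _ => (1 : ℝ)) := by
    funext ω
    rcases h01 ω with h | h
    · rw [Set.indicator_of_notMem, h]
      simp only [Set.mem_setOf_eq, h]; norm_num
    · rw [Set.indicator_of_mem, h]
      simpa using h
  have hms : MeasurableSet {ω | X ω = 1} := hm (measurableSet_singleton 1)
  have hXval : ∫ ω, X ω ∂ℙ = u := by
    rw [show (fun ω => X ω) = X from rfl, hXeq, ← hu]
    simpa [measureReal_def] using integral_indicator_const (1 : ℝ) hms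
  rw [hXval]
  simp

/-- Modulus bound for one Bernoulli factor. -/
lemma aux_factor_bound (u t : ℝ) (hu : u ∈ Set.Icc (0 : ℝ) 1) (ht : |t| ≤ π) :
    ‖(Complex.exp (-((t : ℂ) * Complex.I * u)) *
        (1 + (Complex.exp ((t : ℂ) * Complex.I) - 1) * u))‖
      ≤ Real.exp (-(2 / π ^ 2 * (u * (1 - u)) * t ^ 2)) := by
  obtain ⟨hu0, hu1⟩ := hu
  have habs1 : ‖(Complex.exp (-((t : ℂ) * Complex.I * u)))‖ = 1 := by
    rw [Complex.norm_exp]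
    have : (-((t : ℂ) * Complex.I * u)).re = 0 := by simp
    rw [this, Real.exp_zero]
  rw [norm_mul, habs1, one_mul]
  set z : ℂ := 1 + (Complex.exp ((t : ℂ) * Complex.I) - 1) * u with hz
  have hre : z.re = 1 - u + u * Real.cos t := by
    simp [hz, Complex.add_re, Complex.mul_re]
    ring
  have him : z.im = u * Real.sin t := by
    simp [hz, Complex.add_im, Complex.mul_im]
    ring
  have hnormSq : Complex.normSq z = 1 - 2 * (u * (1 - u)) * (1 - Real.cos t) := by
    rw [Complex.normSq_apply, hre, him]
    have hpyth := Real.sin_sq_add_cos_sq t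
    linear_combination u ^ 2 * hpyth
  have hcos : Real.cos t ≤ 1 - 2 / π ^ 2 * t ^ 2 := Real.cos_le_one_sub_mul_cos_sq ht
  have huu : 0 ≤ u * (1 - u) := mul_nonneg hu0 (by linarith)
  have hstep : Complex.normSq z ≤ 1 - 4 / π ^ 2 * (u * (1 - u)) * t ^ 2 := by
    have h1 : 2 / π ^ 2 * t ^ 2 ≤ 1 - Real.cos t := by linarith
    have h2 : u * (1 - u) * (2 / π ^ 2 * t ^ 2) ≤ u * (1 - u) * (1 - Real.cos t) :=
      mul_le_mul_of_nonneg_left h1 huu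
    have h3 : 4 / π ^ 2 * (u * (1 - u)) * t ^ 2
        = 2 * (u * (1 - u) * (2 / π ^ 2 * t ^ 2)) := by ring
    rw [hnormSq, h3]
    linarith [h2]
  have hexp : (1 : ℝ) - 4 / π ^ 2 * (u * (1 - u)) * t ^ 2
      ≤ Real.exp (-(4 / π ^ 2 * (u * (1 - u)) * t ^ 2)) := by
    have := Real.add_one_le_exp (-(4 / π ^ 2 * (u * (1 - u)) * t ^ 2))
    linarith
  have hsq : Real.exp (-(4 / π ^ 2 * (u * (1 - u)) * t ^ 2))
      = (Real.exp (-(2 / π ^ 2 * (u * (1 - u)) * t ^ 2))) ^ 2 := by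
    have h4 := Real.exp_add (-(2 / π ^ 2 * (u * (1 - u)) * t ^ 2))
      (-(2 / π ^ 2 * (u * (1 - u)) * t ^ 2))
    rw [show -(2 / π ^ 2 * (u * (1 - u)) * t ^ 2) + -(2 / π ^ 2 * (u * (1 - u)) * t ^ 2)
        = -(4 / π ^ 2 * (u * (1 - u)) * t ^ 2) by ring] at h4
    rw [h4]
    exact (sq _).symm
  have hle : Complex.normSq z ≤ Real.exp (-(2 / π ^ 2 * (u * (1 - u)) * t ^ 2)) ^ 2 := by
    rw [← hsq]; exact hstep.trans hexp
  calc ‖z‖ = Real.sqrt (Complex.normSq z) := Complex.norm_def z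
    _ ≤ Real.sqrt (Real.exp (-(2 / π ^ 2 * (u * (1 - u)) * t ^ 2)) ^ 2) :=
        Real.sqrt_le_sqrt hle
    _ = Real.exp (-(2 / π ^ 2 * (u * (1 - u)) * t ^ 2)) :=
        Real.sqrt_sq (Real.exp_nonneg _)

theorem stmt_16 :
    ∃ κ : ℝ, 0 < κ ∧
      ∀ (Ω : Type) (_ : MeasureSpace Ω), IsProbabilityMeasure (ℙ : Measure Ω) →
      ∀ (N : ℕ), 0 < N →
      ∀ (u : Fin N → ℝ), (∀ n, u n ∈ Set.Icc (0:ℝ) 1) →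
      ∀ (X : Fin N → Ω → ℝ), (∀ n, Measurable (X n)) →
        (∀ n ω, X n ω = 0 ∨ X n ω = 1) →
        (∀ n, (ℙ {ω | X n ω = 1}).toReal = u n) →
        iIndepFun X ℙ →
      ∀ θ ∈ Set.Ioo (-(π * Real.sqrt N)) (π * Real.sqrt N),
        ‖(∫ ω, Complex.exp
            ((θ / Real.sqrt N : ℝ) * Complex.I * (∑ n, ((X n ω : ℂ) - (u n : ℂ)))) ∂ℙ)‖ ≤
          Real.exp (-(κ * ((1 / (N : ℝ)) * ∑ n, u n * (1 - u n)) * θ ^ 2)) := by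
  refine ⟨2 / π ^ 2, by positivity, ?_⟩
  intro Ω _ hprob N hN u hu X hXm hX01 hXu hindep θ hθ
  set t : ℝ := θ / Real.sqrt N with htdef
  have hNpos : (0 : ℝ) < N := by exact_mod_cast hN
  have hsN : (0 : ℝ) < Real.sqrt N := Real.sqrt_pos.2 hNpos
  have ht : |t| ≤ π := by
    rw [htdef, abs_div, abs_of_pos hsN, div_le_iff₀ hsN]
    have : |θ| < π * Real.sqrt N := abs_lt.2 ⟨by linarith [hθ.1], hθ.2⟩
    linarith
  have ht2 : t ^ 2 = θ ^ 2 / N := by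
    rw [htdef, div_pow, Real.sq_sqrt hNpos.le]
  -- the factors
  set f : Fin N → Ω → ℂ := fun n ω => Complex.exp ((t : ℂ) * Complex.I * ((X n ω : ℂ) - u n))
    with hf
  have hfeq : ∀ ω, Complex.exp ((t : ℂ) * Complex.I * (∑ n, ((X n ω : ℂ) - (u n : ℂ))))
      = ∏ n, f n ω := by
    intro ω
    rw [Finset.mul_sum, Complex.exp_sum]
  have hfmeas : ∀ n, Measurable (f n) := by
    intro n
    exact Complex.measurable_exp.comp
      ((measurable_const.mul ((Complex.measurable_ofReal.comp (hXm n)).sub measurable_const)))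
  have hfnorm : ∀ n ω, ‖f n ω‖ ≤ 1 := by
    intro n ω
    rw [hf]
    simp only [Complex.norm_exp]
    have : (((t : ℂ)) * Complex.I * ((X n ω : ℂ) - u n)).re = 0 := by
      simp [Complex.mul_re, Complex.mul_im]
    rw [this, Real.exp_zero]
  have hfindep : iIndepFun f ℙ := by
    have := hindep.comp (fun n (x : ℝ) => Complex.exp ((t : ℂ) * Complex.I * ((x : ℂ) - u n)))
      (fun n => Complex.measurable_exp.comp
        ((measurable_const.mul ((Complex.measurable_ofReal).sub measurable_const))))
    exact this
  have hint : ∫ ω, Complex.exp ((t : ℂ) * Complex.I * (∑ n, ((X n ω : ℂ) - (u n : ℂ)))) ∂ℙ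
      = ∏ n, ∫ ω, f n ω ∂ℙ := by
    rw [show (fun ω => Complex.exp ((t : ℂ) * Complex.I * (∑ n, ((X n ω : ℂ) - (u n : ℂ)))))
        = fun ω => ∏ n, f n ω from funext hfeq]
    exact aux_integral_finset_prod hfindep hfmeas hfnorm Finset.univ
  have hval : ∀ n, ∫ ω, f n ω ∂ℙ
      = Complex.exp (-((t : ℂ) * Complex.I * u n)) *
          (1 + (Complex.exp ((t : ℂ) * Complex.I) - 1) * u n) := fun n =>
    aux_bernoulli_integral (X n) (hXm n) (hX01 n) (u n) (hXu n) t
  rw [hint]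
  calc ‖(∏ n, ∫ ω, f n ω ∂ℙ)‖ = ∏ n, ‖(∫ ω, f n ω ∂ℙ)‖ :=
        norm_prod _ _
    _ ≤ ∏ n, Real.exp (-(2 / π ^ 2 * (u n * (1 - u n)) * t ^ 2)) := by
        refine Finset.prod_le_prod (fun n _ => norm_nonneg _) (fun n _ => ?_)
        rw [hval n]
        exact aux_factor_bound (u n) t (hu n) ht
    _ = Real.exp (∑ n, -(2 / π ^ 2 * (u n * (1 - u n)) * t ^ 2)) := by
        rw [Real.exp_sum]
    _ = Real.exp (-(2 / π ^ 2 * ((1 / (N : ℝ)) * ∑ n, u n * (1 - u n)) * θ ^ 2)) := by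
        congr 1
        have hsum : ∑ n, -(2 / π ^ 2 * (u n * (1 - u n)) * t ^ 2)
            = (-(2 / π ^ 2 * t ^ 2)) * ∑ n, u n * (1 - u n) := by
          rw [Finset.mul_sum]
          exact Finset.sum_congr rfl fun n _ => by ring
        rw [hsum, ht2]
        field_simp
end
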